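/- Let Z, N be real random variables and for t ∈ [0,1] define Ψ(t) = E[φ(√(1−t) Z + √t N)] for a function φ : ℝ → ℝ of class C² with bounded second derivative, where Z and N are independent and square-integrable. Then Ψ is differentiable on (0,1) with Ψ'(t) = E[φ'(√(1−t)Z + √t N)(N/(2√t) − Z/(2√(1−t)))], and |E[φ(Z)] − E[φ(N)]| ≤ ∫_0^1 |Ψ'(t)| dt. -/

import Mathlib

open MeasureTheory ProbabilityTheory Real

lemma sp_deriv_bound {φ : ℝ → ℝ} (hφ : ContDiff ℝ 2 φ) {C : ℝ}
    (hC : ∀ x : ℝ, |deriv (deriv φ) x| ≤ C) (x : ℝ) :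
    |deriv φ x| ≤ |deriv φ 0| + C * |x| := by
  have h2 : ContDiff ℝ ((1 : ℕ) + 1) φ := by exact_mod_cast hφ
  have hd2 : Differentiable ℝ (deriv φ) :=
    (contDiff_succ_iff_deriv.mp h2).2.2.differentiable (by norm_num)
  have key := Convex.norm_image_sub_le_of_norm_deriv_le (f := deriv φ)
    (fun y _ => hd2 y) (fun y _ => hC y) convex_univ (Set.mem_univ 0) (Set.mem_univ x)
  simp only [Real.norm_eq_abs, sub_zero] at key
  have h3 := abs_sub_abs_le_abs_sub (deriv φ x) (deriv φ 0)
  linarith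

lemma sp_phi_bound {φ : ℝ → ℝ} (hφ : ContDiff ℝ 2 φ) {C : ℝ}
    (hC : ∀ x : ℝ, |deriv (deriv φ) x| ≤ C) (x : ℝ) :
    |φ x| ≤ |φ 0| + |deriv φ 0| * |x| + C * (|x| * |x|) := by
  have hd1 : Differentiable ℝ φ := hφ.differentiable (by norm_num)
  have hC0 : 0 ≤ C := le_trans (abs_nonneg _) (hC 0)
  have key := Convex.norm_image_sub_le_of_norm_deriv_le (f := φ)
    (C := |deriv φ 0| + C * |x|)
    (fun y _ => hd1 y)
    (fun y hy => by
      have hy' : |y| ≤ |x| := abs_le.mpr ⟨hy.1, hy.2⟩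
      have h := sp_deriv_bound hφ hC y
      simp only [Real.norm_eq_abs]
      nlinarith)
    (convex_Icc (-|x|) |x|)
    ⟨neg_nonpos.mpr (abs_nonneg x), abs_nonneg x⟩
    ⟨neg_abs_le x, le_abs_self x⟩
  simp only [Real.norm_eq_abs, sub_zero] at key
  have h3 := abs_sub_abs_le_abs_sub (φ x) (φ 0)
  nlinarith [abs_nonneg x]

lemma sp_factor_bound {n z s a b : ℝ} (hn : |n| ≤ s) (hz : |z| ≤ s) (ha : 0 < a) (hb : 0 < b) :
    |n / (2 * a) - z / (2 * b)| ≤ s * (1 / (2 * a) + 1 / (2 * b)) := by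
  have h1 : |n / (2 * a)| = |n| / (2 * a) := by
    rw [abs_div, abs_of_pos (show (0:ℝ) < 2 * a by positivity)]
  have h2 : |z / (2 * b)| = |z| / (2 * b) := by
    rw [abs_div, abs_of_pos (show (0:ℝ) < 2 * b by positivity)]
  have h3 : |n / (2 * a) - z / (2 * b)| ≤ |n / (2 * a)| + |z / (2 * b)| := abs_sub _ _
  rw [h1, h2] at h3
  have e : s * (1 / (2 * a) + 1 / (2 * b)) = s / (2 * a) + s / (2 * b) := by ring
  rw [e]
  refine h3.trans (add_le_add ?_ ?_) <;> gcongr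

set_option maxHeartbeats 1000000 in
theorem smart_path_interpolation
    {Ω : Type*} [MeasurableSpace Ω] (μ : Measure Ω) [IsProbabilityMeasure μ]
    (Z N : Ω → ℝ) (hZ : Measurable Z) (hN : Measurable N)
    (hindep : IndepFun Z N μ)
    (hZ2 : MemLp Z 2 μ) (hN2 : MemLp N 2 μ)
    (φ : ℝ → ℝ) (hφ : ContDiff ℝ 2 φ)
    (hφ'' : ∃ C : ℝ, ∀ x : ℝ, |deriv (deriv φ) x| ≤ C) :
    (∀ t ∈ Set.Ioo (0 : ℝ) 1,
      HasDerivAt (fun s : ℝ => ∫ ω, φ (Real.sqrt (1 - s) * Z ω + Real.sqrt s * N ω) ∂μ)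
        (∫ ω, deriv φ (Real.sqrt (1 - t) * Z ω + Real.sqrt t * N ω)
            * (N ω / (2 * Real.sqrt t) - Z ω / (2 * Real.sqrt (1 - t))) ∂μ) t) ∧
    |(∫ ω, φ (Z ω) ∂μ) - ∫ ω, φ (N ω) ∂μ|
      ≤ ∫ t in Set.Ioo (0 : ℝ) 1,
          |deriv (fun s : ℝ => ∫ ω, φ (Real.sqrt (1 - s) * Z ω + Real.sqrt s * N ω) ∂μ) t| := by
  classical
  obtain ⟨C, hC⟩ := hφ''
  have hC0 : 0 ≤ C := le_trans (abs_nonneg _) (hC 0)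
  set A := |deriv φ 0| with hA
  have hA0 : 0 ≤ A := abs_nonneg _
  have hd1 : Differentiable ℝ φ := hφ.differentiable (by norm_num)
  have hcd : Continuous (deriv φ) := (contDiff_one_iff_deriv.mp (hφ.of_le one_le_two)).2
  set S : Ω → ℝ := fun ω => |Z ω| + |N ω| with hS
  have hSmeas : Measurable S := hZ.abs.add hN.abs
  have hS0 : ∀ ω, 0 ≤ S ω := fun ω => add_nonneg (abs_nonneg _) (abs_nonneg _)
  have hS2 : MemLp S 2 μ := by
    have h := hZ2.norm.add hN2.norm
    simp only [Real.norm_eq_abs] at h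
    exact h
  have intS : Integrable S μ := hS2.integrable one_le_two
  have intS2 : Integrable (fun ω => S ω * S ω) μ := by
    simpa [sq] using hS2.integrable_sq
  have intQuad : ∀ a b c : ℝ, Integrable (fun ω => a + b * S ω + c * (S ω * S ω)) μ :=
    fun a b c => ((integrable_const a).add (intS.const_mul b)).add (intS2.const_mul c)
  set Ψ : ℝ → ℝ :=
    fun s : ℝ => ∫ ω, φ (Real.sqrt (1 - s) * Z ω + Real.sqrt s * N ω) ∂μ with hΨ
  -- measurability facts
  have hXmeas : ∀ s : ℝ,
      Measurable fun ω => Real.sqrt (1 - s) * Z ω + Real.sqrt s * N ω :=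
    fun s => (hZ.const_mul _).add (hN.const_mul _)
  have hFmeas : ∀ s : ℝ, AEStronglyMeasurable
      (fun ω => φ (Real.sqrt (1 - s) * Z ω + Real.sqrt s * N ω)) μ :=
    fun s => (hφ.continuous.measurable.comp (hXmeas s)).aestronglyMeasurable
  have hF'meas : ∀ s : ℝ, AEStronglyMeasurable
      (fun ω => deriv φ (Real.sqrt (1 - s) * Z ω + Real.sqrt s * N ω)
        * (N ω / (2 * Real.sqrt s) - Z ω / (2 * Real.sqrt (1 - s)))) μ :=
    fun s => (((hcd.measurable.comp (hXmeas s)).mul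
      ((hN.div_const _).sub (hZ.div_const _))).aestronglyMeasurable)
  -- |X s ω| ≤ S ω for s ∈ [0,1]
  have hXle : ∀ s : ℝ, 0 ≤ s → s ≤ 1 → ∀ ω,
      |Real.sqrt (1 - s) * Z ω + Real.sqrt s * N ω| ≤ S ω := by
    intro s hs0 hs1 ω
    have h1 : Real.sqrt (1 - s) ≤ 1 := by
      have := Real.sqrt_le_sqrt (show (1:ℝ) - s ≤ 1 by linarith)
      simpa using this
    have h2 : Real.sqrt s ≤ 1 := by
      have := Real.sqrt_le_sqrt hs1
      simpa using this
    have h3 := abs_add_le (Real.sqrt (1 - s) * Z ω) (Real.sqrt s * N ω)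
    rw [abs_mul, abs_mul, abs_of_nonneg (Real.sqrt_nonneg _),
      abs_of_nonneg (Real.sqrt_nonneg _)] at h3
    have h4 : Real.sqrt (1 - s) * |Z ω| ≤ |Z ω| :=
      mul_le_of_le_one_left (abs_nonneg _) h1
    have h5 : Real.sqrt s * |N ω| ≤ |N ω| :=
      mul_le_of_le_one_left (abs_nonneg _) h2
    simp only [hS]
    linarith
  -- |deriv φ (X s ω)| ≤ A + C * S ω for s ∈ [0,1]
  have hDle : ∀ s : ℝ, 0 ≤ s → s ≤ 1 → ∀ ω,
      |deriv φ (Real.sqrt (1 - s) * Z ω + Real.sqrt s * N ω)| ≤ A + C * S ω := by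
    intro s hs0 hs1 ω
    have h := sp_deriv_bound hφ hC (Real.sqrt (1 - s) * Z ω + Real.sqrt s * N ω)
    rw [← hA] at h
    have h2 := hXle s hs0 hs1 ω
    nlinarith [abs_nonneg (Real.sqrt (1 - s) * Z ω + Real.sqrt s * N ω)]
  -- integrability of F s for s ∈ [0,1]
  have intF : ∀ s : ℝ, 0 ≤ s → s ≤ 1 →
      Integrable (fun ω => φ (Real.sqrt (1 - s) * Z ω + Real.sqrt s * N ω)) μ := by
    intro s hs0 hs1
    refine (intQuad (|φ 0|) A C).mono' (hFmeas s) (Filter.Eventually.of_forall fun ω => ?_)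
    have h := sp_phi_bound hφ hC (Real.sqrt (1 - s) * Z ω + Real.sqrt s * N ω)
    rw [← hA] at h
    have h2 := hXle s hs0 hs1 ω
    rw [Real.norm_eq_abs]
    have p1 : A * |Real.sqrt (1 - s) * Z ω + Real.sqrt s * N ω| ≤ A * S ω :=
      mul_le_mul_of_nonneg_left h2 hA0
    have p2 : |Real.sqrt (1 - s) * Z ω + Real.sqrt s * N ω|
        * |Real.sqrt (1 - s) * Z ω + Real.sqrt s * N ω| ≤ S ω * S ω :=
      mul_le_mul h2 h2 (abs_nonneg _) (hS0 ω)
    have p3 : C * (|Real.sqrt (1 - s) * Z ω + Real.sqrt s * N ω|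
        * |Real.sqrt (1 - s) * Z ω + Real.sqrt s * N ω|) ≤ C * (S ω * S ω) :=
      mul_le_mul_of_nonneg_left p2 hC0
    linarith
  have intH : Integrable (fun ω => (A + C * S ω) * S ω) μ := by
    refine ((intS.const_mul A).add (intS2.const_mul C)).congr
      (Filter.Eventually.of_forall fun ω => ?_)
    simp only [Pi.add_apply, hS]
    ring
  -- the key differentiability statement
  have key : ∀ t ∈ Set.Ioo (0 : ℝ) 1,
      Integrable (fun ω => deriv φ (Real.sqrt (1 - t) * Z ω + Real.sqrt t * N ω)
        * (N ω / (2 * Real.sqrt t) - Z ω / (2 * Real.sqrt (1 - t)))) μ ∧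
      HasDerivAt Ψ (∫ ω, deriv φ (Real.sqrt (1 - t) * Z ω + Real.sqrt t * N ω)
        * (N ω / (2 * Real.sqrt t) - Z ω / (2 * Real.sqrt (1 - t))) ∂μ) t := by
    intro t ht
    obtain ⟨ht0, ht1⟩ := ht
    set ε := min t (1 - t) / 2 with hε
    have hε0 : 0 < ε := div_pos (lt_min ht0 (by linarith)) two_pos
    have hball : ∀ s ∈ Metric.ball t ε, t / 2 ≤ s ∧ s ≤ 1 - (1 - t) / 2 := by
      intro s hs
      rw [Metric.mem_ball, Real.dist_eq, abs_sub_lt_iff] at hs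
      have hm1 : min t (1 - t) ≤ t := min_le_left _ _
      have hm2 : min t (1 - t) ≤ 1 - t := min_le_right _ _
      constructor
      · linarith [hs.2]
      · linarith [hs.1]
    set K := 1 / (2 * Real.sqrt (t / 2)) + 1 / (2 * Real.sqrt ((1 - t) / 2)) with hK
    have hsqt : 0 < Real.sqrt (t / 2) := Real.sqrt_pos.mpr (by linarith)
    have hsq1t : 0 < Real.sqrt ((1 - t) / 2) := Real.sqrt_pos.mpr (by linarith)
    have hK0 : 0 ≤ K := by positivity
    have intbound : Integrable (fun ω => (A + C * S ω) * S ω * K) μ := intH.mul_const K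
    have h_bound : ∀ᵐ ω ∂μ, ∀ s ∈ Metric.ball t ε,
        ‖deriv φ (Real.sqrt (1 - s) * Z ω + Real.sqrt s * N ω)
          * (N ω / (2 * Real.sqrt s) - Z ω / (2 * Real.sqrt (1 - s)))‖
          ≤ (A + C * S ω) * S ω * K := by
      refine Filter.Eventually.of_forall fun ω => fun s hs => ?_
      obtain ⟨hs1, hs2⟩ := hball s hs
      have hs0 : 0 < s := lt_of_lt_of_le (by linarith) hs1
      have h1s : 0 < 1 - s := by linarith
      have hsql : 0 < Real.sqrt s := Real.sqrt_pos.mpr hs0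
      have hsqr : 0 < Real.sqrt (1 - s) := Real.sqrt_pos.mpr h1s
      have hd := hDle s hs0.le (by linarith) ω
      have hNle : |N ω| ≤ S ω := by simp only [hS]; linarith [abs_nonneg (Z ω)]
      have hZle : |Z ω| ≤ S ω := by simp only [hS]; linarith [abs_nonneg (N ω)]
      have hf2 := sp_factor_bound hNle hZle hsql hsqr
      have hmono : 1 / (2 * Real.sqrt s) + 1 / (2 * Real.sqrt (1 - s)) ≤ K := by
        rw [hK]
        have m1 : Real.sqrt (t / 2) ≤ Real.sqrt s := Real.sqrt_le_sqrt hs1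
        have m2 : Real.sqrt ((1 - t) / 2) ≤ Real.sqrt (1 - s) :=
          Real.sqrt_le_sqrt (by linarith)
        gcongr
      have hf2' : |N ω / (2 * Real.sqrt s) - Z ω / (2 * Real.sqrt (1 - s))| ≤ S ω * K := by
        refine hf2.trans ?_
        exact mul_le_mul_of_nonneg_left hmono (hS0 ω)
      rw [Real.norm_eq_abs, abs_mul]
      have hpos : 0 ≤ A + C * S ω := by nlinarith [hS0 ω]
      calc |deriv φ (Real.sqrt (1 - s) * Z ω + Real.sqrt s * N ω)|
            * |N ω / (2 * Real.sqrt s) - Z ω / (2 * Real.sqrt (1 - s))|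
          ≤ (A + C * S ω) * (S ω * K) :=
            mul_le_mul hd hf2' (abs_nonneg _) hpos
        _ = (A + C * S ω) * S ω * K := by ring
    have h_diff : ∀ᵐ ω ∂μ, ∀ s ∈ Metric.ball t ε,
        HasDerivAt (fun u : ℝ => φ (Real.sqrt (1 - u) * Z ω + Real.sqrt u * N ω))
          (deriv φ (Real.sqrt (1 - s) * Z ω + Real.sqrt s * N ω)
            * (N ω / (2 * Real.sqrt s) - Z ω / (2 * Real.sqrt (1 - s)))) s := by
      refine Filter.Eventually.of_forall fun ω => fun s hs => ?_
      obtain ⟨hs1, hs2⟩ := hball s hs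
      have hs0 : 0 < s := lt_of_lt_of_le (by linarith) hs1
      have h1s : 0 < 1 - s := by linarith
      have hsql : Real.sqrt s ≠ 0 := ne_of_gt (Real.sqrt_pos.mpr hs0)
      have hsqr : Real.sqrt (1 - s) ≠ 0 := ne_of_gt (Real.sqrt_pos.mpr h1s)
      have d0 : HasDerivAt (fun u : ℝ => 1 - u) (-1) s := by
        simpa using (hasDerivAt_id s).const_sub 1
      have d1 : HasDerivAt (fun u : ℝ => Real.sqrt (1 - u))
          (-(1 / (2 * Real.sqrt (1 - s)))) s := by
        have h := (Real.hasDerivAt_sqrt (by linarith : (1 : ℝ) - s ≠ 0)).comp s d0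
        exact h.congr_deriv (by ring)
      have d2 : HasDerivAt (fun u : ℝ => Real.sqrt u) (1 / (2 * Real.sqrt s)) s :=
        Real.hasDerivAt_sqrt (ne_of_gt hs0)
      have dX : HasDerivAt (fun u : ℝ => Real.sqrt (1 - u) * Z ω + Real.sqrt u * N ω)
          (-(1 / (2 * Real.sqrt (1 - s))) * Z ω + 1 / (2 * Real.sqrt s) * N ω) s :=
        (d1.mul_const _).add (d2.mul_const _)
      have dφ := (hd1 (Real.sqrt (1 - s) * Z ω + Real.sqrt s * N ω)).hasDerivAt
      have h := dφ.comp s dX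
      exact h.congr_deriv (by ring)
    have H := hasDerivAt_integral_of_dominated_loc_of_deriv_le (Metric.ball_mem_nhds t hε0)
      (Filter.Eventually.of_forall hFmeas) (intF t ht0.le ht1.le) (hF'meas t)
      h_bound intbound h_diff
    exact ⟨H.1, H.2⟩
  refine ⟨fun t ht => (key t ht).2, ?_⟩
  -- continuity of Ψ
  have contΨ : Continuous Ψ := by
    rw [continuous_iff_continuousAt]
    intro x₀
    set c := Real.sqrt (|x₀| + 2) with hc
    have hc0 : 0 < c := Real.sqrt_pos.mpr (by positivity)
    apply continuousAt_of_dominated (bound := fun ω => |φ 0| + A * c * S ω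
      + C * c * c * (S ω * S ω))
    · exact Filter.Eventually.of_forall hFmeas
    · filter_upwards [Metric.ball_mem_nhds x₀ one_pos] with s hs
      refine Filter.Eventually.of_forall fun ω => ?_
      rw [Metric.mem_ball, Real.dist_eq, abs_sub_lt_iff] at hs
      have hax1 := le_abs_self x₀
      have hax2 := neg_abs_le x₀
      have h1 : Real.sqrt s ≤ c := Real.sqrt_le_sqrt (by linarith [hs.1])
      have h2 : Real.sqrt (1 - s) ≤ c := Real.sqrt_le_sqrt (by linarith [hs.2])
      have h3 := abs_add_le (Real.sqrt (1 - s) * Z ω) (Real.sqrt s * N ω)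
      rw [abs_mul, abs_mul, abs_of_nonneg (Real.sqrt_nonneg _),
        abs_of_nonneg (Real.sqrt_nonneg _)] at h3
      have h4 : Real.sqrt (1 - s) * |Z ω| ≤ c * |Z ω| :=
        mul_le_mul_of_nonneg_right h2 (abs_nonneg _)
      have h5 : Real.sqrt s * |N ω| ≤ c * |N ω| :=
        mul_le_mul_of_nonneg_right h1 (abs_nonneg _)
      have hXc : |Real.sqrt (1 - s) * Z ω + Real.sqrt s * N ω| ≤ c * S ω := by
        simp only [hS]; nlinarith
      have h := sp_phi_bound hφ hC (Real.sqrt (1 - s) * Z ω + Real.sqrt s * N ω)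
      rw [← hA] at h
      rw [Real.norm_eq_abs]
      have p1 : A * |Real.sqrt (1 - s) * Z ω + Real.sqrt s * N ω| ≤ A * (c * S ω) :=
        mul_le_mul_of_nonneg_left hXc hA0
      have p2 : |Real.sqrt (1 - s) * Z ω + Real.sqrt s * N ω|
          * |Real.sqrt (1 - s) * Z ω + Real.sqrt s * N ω| ≤ (c * S ω) * (c * S ω) :=
        mul_le_mul hXc hXc (abs_nonneg _) (mul_nonneg hc0.le (hS0 ω))
      have p3 : C * (|Real.sqrt (1 - s) * Z ω + Real.sqrt s * N ω|
          * |Real.sqrt (1 - s) * Z ω + Real.sqrt s * N ω|) ≤ C * ((c * S ω) * (c * S ω)) :=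
        mul_le_mul_of_nonneg_left p2 hC0
      nlinarith [p1, p3]
    · exact intQuad _ _ _
    · refine Filter.Eventually.of_forall fun ω => ?_
      have hcont : Continuous fun s : ℝ =>
          φ (Real.sqrt (1 - s) * Z ω + Real.sqrt s * N ω) :=
        hφ.continuous.comp
          (((Real.continuous_sqrt.comp (continuous_const.sub continuous_id)).mul
            continuous_const).add (Real.continuous_sqrt.mul continuous_const))
      exact hcont.continuousAt
  -- bound on the derivative
  set M := ∫ ω, (A + C * S ω) * S ω ∂μ with hM
  have hM0 : 0 ≤ M := integral_nonneg fun ω => mul_nonneg (by nlinarith [hS0 ω]) (hS0 ω)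
  have hderiv_bound : ∀ t ∈ Set.Ioo (0 : ℝ) 1,
      |deriv Ψ t| ≤ M * (1 / (2 * Real.sqrt t) + 1 / (2 * Real.sqrt (1 - t))) := by
    intro t ht
    obtain ⟨ht0, ht1⟩ := ht
    have hk := key t ⟨ht0, ht1⟩
    rw [hk.2.deriv]
    have hsql : 0 < Real.sqrt t := Real.sqrt_pos.mpr ht0
    have hsqr : 0 < Real.sqrt (1 - t) := Real.sqrt_pos.mpr (by linarith)
    have step1 : |∫ ω, deriv φ (Real.sqrt (1 - t) * Z ω + Real.sqrt t * N ω)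
        * (N ω / (2 * Real.sqrt t) - Z ω / (2 * Real.sqrt (1 - t))) ∂μ|
        ≤ ∫ ω, |deriv φ (Real.sqrt (1 - t) * Z ω + Real.sqrt t * N ω)
        * (N ω / (2 * Real.sqrt t) - Z ω / (2 * Real.sqrt (1 - t)))| ∂μ := by
      have h := norm_integral_le_integral_norm
        (μ := μ) (f := fun ω => deriv φ (Real.sqrt (1 - t) * Z ω + Real.sqrt t * N ω)
          * (N ω / (2 * Real.sqrt t) - Z ω / (2 * Real.sqrt (1 - t))))
      simp only [Real.norm_eq_abs] at h
      exact h
    refine step1.trans ?_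
    have step2 : ∫ ω, |deriv φ (Real.sqrt (1 - t) * Z ω + Real.sqrt t * N ω)
        * (N ω / (2 * Real.sqrt t) - Z ω / (2 * Real.sqrt (1 - t)))| ∂μ
        ≤ ∫ ω, (A + C * S ω) * S ω
            * (1 / (2 * Real.sqrt t) + 1 / (2 * Real.sqrt (1 - t))) ∂μ := by
      refine integral_mono hk.1.abs
        (intH.mul_const _) fun ω => ?_
      have hd := hDle t ht0.le ht1.le ω
      have hNle : |N ω| ≤ S ω := by simp only [hS]; linarith [abs_nonneg (Z ω)]
      have hZle : |Z ω| ≤ S ω := by simp only [hS]; linarith [abs_nonneg (N ω)]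
      have hf2 := sp_factor_bound hNle hZle hsql hsqr
      have hpos : 0 ≤ A + C * S ω := by nlinarith [hS0 ω]
      rw [abs_mul]
      calc |deriv φ (Real.sqrt (1 - t) * Z ω + Real.sqrt t * N ω)|
            * |N ω / (2 * Real.sqrt t) - Z ω / (2 * Real.sqrt (1 - t))|
          ≤ (A + C * S ω) * (S ω * (1 / (2 * Real.sqrt t) + 1 / (2 * Real.sqrt (1 - t)))) :=
            mul_le_mul hd hf2 (abs_nonneg _) hpos
        _ = (A + C * S ω) * S ω * (1 / (2 * Real.sqrt t) + 1 / (2 * Real.sqrt (1 - t))) := by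
            ring
    refine step2.trans ?_
    rw [integral_mul_const]
  -- integrability of the dominating function on (0,1)
  have gInt : IntegrableOn
      (fun t => M * (1 / (2 * Real.sqrt t) + 1 / (2 * Real.sqrt (1 - t))))
      (Set.Ioo (0 : ℝ) 1) volume := by
    have i1 : IntervalIntegrable (fun t : ℝ => t ^ (-(1 / 2) : ℝ)) volume 0 1 :=
      intervalIntegral.intervalIntegrable_rpow' (by norm_num)
    have i2 : IntervalIntegrable (fun t : ℝ => (1 - t) ^ (-(1 / 2) : ℝ)) volume 0 1 := by
      have h := i1.comp_sub_left 1
      simpa using h.symm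
    have i3 : IntervalIntegrable (fun t : ℝ =>
        M * ((1 / 2) * t ^ (-(1 / 2) : ℝ) + (1 / 2) * (1 - t) ^ (-(1 / 2) : ℝ)))
        volume 0 1 := by
      exact ((i1.const_mul (1 / 2)).add (i2.const_mul (1 / 2))).const_mul M
    have i4 : IntegrableOn (fun t : ℝ =>
        M * ((1 / 2) * t ^ (-(1 / 2) : ℝ) + (1 / 2) * (1 - t) ^ (-(1 / 2) : ℝ)))
        (Set.Ioo (0 : ℝ) 1) volume := by
      have := (intervalIntegrable_iff_integrableOn_Ioo_of_le zero_le_one).mp i3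
      exact this
    refine i4.congr_fun (fun t ht => ?_) measurableSet_Ioo
    obtain ⟨ht0, ht1⟩ := ht
    have h1t : (0 : ℝ) < 1 - t := by linarith
    have e1 : t ^ (-(1 / 2) : ℝ) = 1 / Real.sqrt t := by
      rw [Real.rpow_neg ht0.le, Real.sqrt_eq_rpow]
      exact (one_div _).symm
    have e2 : (1 - t) ^ (-(1 / 2) : ℝ) = 1 / Real.sqrt (1 - t) := by
      rw [Real.rpow_neg h1t.le, Real.sqrt_eq_rpow]
      exact (one_div _).symm
    simp only [e1, e2]
    ring
  -- integrability of deriv Ψ on (0,1)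
  have measderiv : Measurable (deriv Ψ) := measurable_deriv Ψ
  have dInt : IntegrableOn (deriv Ψ) (Set.Ioo (0 : ℝ) 1) volume := by
    refine Integrable.mono' gInt measderiv.aestronglyMeasurable.restrict ?_
    rw [ae_restrict_iff' measurableSet_Ioo]
    exact Filter.Eventually.of_forall fun t ht => by
      simpa [Real.norm_eq_abs] using hderiv_bound t ht
  have dIntAbs : IntegrableOn (fun t => |deriv Ψ t|) (Set.Ioo (0 : ℝ) 1) volume := dInt.abs
  -- FTC on [a, b] ⊆ (0,1) and the bound
  set I := ∫ t in Set.Ioo (0 : ℝ) 1, |deriv Ψ t| with hI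
  have hseq : ∀ n : ℕ,
      |Ψ (1 - ((n : ℝ) + 2)⁻¹) - Ψ (((n : ℝ) + 2)⁻¹)| ≤ I := by
    intro n
    set a : ℝ := ((n : ℝ) + 2)⁻¹ with ha'
    set b : ℝ := 1 - a with hb'
    have hn2 : (2 : ℝ) ≤ (n : ℝ) + 2 := by
      have := Nat.cast_nonneg (α := ℝ) n
      linarith
    have ha : 0 < a := by positivity
    have ha1 : a ≤ 1 / 2 := by
      rw [ha']
      rw [show (1 : ℝ) / 2 = ((2 : ℝ))⁻¹ by norm_num]
      exact inv_anti₀ two_pos hn2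
    have hab : a ≤ b := by rw [hb']; linarith
    have hb1 : b < 1 := by rw [hb']; linarith
    have hsub : Set.uIcc a b ⊆ Set.Ioo (0 : ℝ) 1 := by
      rw [Set.uIcc_of_le hab]
      intro x hx
      exact ⟨lt_of_lt_of_le ha hx.1, lt_of_le_of_lt hx.2 hb1⟩
    have hsub2 : Set.Ioc a b ⊆ Set.Ioo (0 : ℝ) 1 := fun x hx =>
      ⟨lt_trans ha hx.1, lt_of_le_of_lt hx.2 hb1⟩
    have hii : IntervalIntegrable (deriv Ψ) volume a b := by
      rw [intervalIntegrable_iff, Set.uIoc_of_le hab]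
      exact dInt.mono_set hsub2
    have hFTC : ∫ x in a..b, deriv Ψ x = Ψ b - Ψ a := by
      refine intervalIntegral.integral_eq_sub_of_hasDerivAt (fun x hx => ?_) hii
      have h := (key x (hsub hx)).2
      rw [h.deriv]
      exact h
    have h1 : |Ψ b - Ψ a| ≤ ∫ x in a..b, |deriv Ψ x| := by
      rw [← hFTC]
      exact intervalIntegral.abs_integral_le_integral_abs hab
    have h2 : ∫ x in a..b, |deriv Ψ x| = ∫ x in Set.Ioc a b, |deriv Ψ x| :=
      intervalIntegral.integral_of_le hab
    have h3 : ∫ x in Set.Ioc a b, |deriv Ψ x| ≤ I := by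
      rw [hI]
      refine setIntegral_mono_set dIntAbs ?_ (HasSubset.Subset.eventuallyLE hsub2)
      exact Filter.Eventually.of_forall fun t => abs_nonneg _
    calc |Ψ b - Ψ a| ≤ ∫ x in a..b, |deriv Ψ x| := h1
      _ = ∫ x in Set.Ioc a b, |deriv Ψ x| := h2
      _ ≤ I := h3
  -- take the limit
  have tendA : Filter.Tendsto (fun n : ℕ => ((n : ℝ) + 2)⁻¹) Filter.atTop (nhds 0) := by
    have h1 : Filter.Tendsto (fun n : ℕ => (n : ℝ) + 2) Filter.atTop Filter.atTop :=
      Filter.tendsto_atTop_add_const_right _ 2 tendsto_natCast_atTop_atTop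
    exact h1.inv_tendsto_atTop
  have tendB : Filter.Tendsto (fun n : ℕ => 1 - ((n : ℝ) + 2)⁻¹) Filter.atTop (nhds 1) := by
    have := tendsto_const_nhds (x := (1 : ℝ)) (f := Filter.atTop (α := ℕ))
    simpa using this.sub tendA
  have t1 : Filter.Tendsto
      (fun n : ℕ => |Ψ (1 - ((n : ℝ) + 2)⁻¹) - Ψ (((n : ℝ) + 2)⁻¹)|)
      Filter.atTop (nhds (|Ψ 1 - Ψ 0|)) := by
    have hc1 : Filter.Tendsto (fun n : ℕ => Ψ (1 - ((n : ℝ) + 2)⁻¹)) Filter.atTop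
        (nhds (Ψ 1)) := (contΨ.tendsto 1).comp tendB
    have hc0 : Filter.Tendsto (fun n : ℕ => Ψ (((n : ℝ) + 2)⁻¹)) Filter.atTop
        (nhds (Ψ 0)) := (contΨ.tendsto 0).comp tendA
    exact (hc1.sub hc0).abs
  have hfinal : |Ψ 1 - Ψ 0| ≤ I := le_of_tendsto t1 (Filter.Eventually.of_forall hseq)
  have hΨ0 : Ψ 0 = ∫ ω, φ (Z ω) ∂μ := by
    rw [hΨ]
    norm_num
  have hΨ1 : Ψ 1 = ∫ ω, φ (N ω) ∂μ := by
    rw [hΨ]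
    norm_num
  rw [← hΨ0, ← hΨ1, abs_sub_comm]
  exact hfinal
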